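/- Let k be a field with char k = 0 (or char k > m), let S_m = k[U_i^{(j)} : 1 ≤ i ≤ N, 0 ≤ j ≤ m], and let D : S_m → S_{m+1} be the unique k-derivation with D(U_i^{(j)}) = U_i^{(j+1)} for all i and j ≤ m. For f ∈ k[U_1,...,U_N] = S_0 and a k-algebra homomorphism θ : k[U] → A[t]/(t^{m+1}) with θ(U_i) = ∑_{j=0}^m θ_i^{(j)} t^j, one has θ(f) = 0 if and only if D^j(f) vanishes at the point (j'! · θ_i^{(j')})_{i,j'} for all 0 ≤ j ≤ m. -/

import Mathlib

open MvPolynomial Polynomial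

/- STATEMENT 1: In characteristic zero, with S = k[U_i^{(j)}] and D the derivation with
D(U_i^{(j)}) = U_i^{(j+1)}, a homomorphism θ : k[U] → A[t]/(t^{m+1}) with
θ(U_i) = ∑ θ_i^{(j)} t^j kills f iff D^j(f) vanishes at (j'!·θ_i^{(j')}) for all 0 ≤ j ≤ m. -/

theorem stmt1 (k : Type*) [Field k] [CharZero k] (A : Type*) [CommRing A] [Algebra k A]
    (N m : ℕ) (f : MvPolynomial (Fin N) k) (θ : Fin N → Fin (m + 1) → A) :
    (MvPolynomial.aeval
        (fun i : Fin N => ∑ j : Fin (m + 1),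
          Polynomial.C (θ i j) * Polynomial.X ^ (j : ℕ)) f ∈
        Ideal.span {(Polynomial.X : Polynomial A) ^ (m + 1)}) ↔
      ∀ j ≤ m,
        MvPolynomial.aeval
          (fun p : Fin N × ℕ =>
            if h : p.2 < m + 1 then (Nat.factorial p.2) • θ p.1 ⟨p.2, h⟩ else (0 : A))
          ((⇑(MvPolynomial.mkDerivation k
              (fun p : Fin N × ℕ => (MvPolynomial.X (p.1, p.2 + 1) :
                MvPolynomial (Fin N × ℕ) k))))^[j]
            (MvPolynomial.rename (fun i : Fin N => (i, (0 : ℕ))) f)) = 0 := by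
  set D := MvPolynomial.mkDerivation k
      (fun p : Fin N × ℕ => (MvPolynomial.X (p.1, p.2 + 1) : MvPolynomial (Fin N × ℕ) k)) with hD
  set g : Fin N → Polynomial A := fun i => ∑ j : Fin (m + 1),
      Polynomial.C (θ i j) * Polynomial.X ^ (j : ℕ) with hg
  set T : MvPolynomial (Fin N × ℕ) k →ₐ[k] Polynomial A :=
      MvPolynomial.aeval (fun p => Polynomial.derivative^[p.2] (g p.1)) with hT
  -- commutation
  have comm : ∀ s, T (D s) = Polynomial.derivative (T s) := by
    intro s
    induction s using MvPolynomial.induction_on with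
    | C a =>
        have h1 : D (MvPolynomial.C a) = 0 := by
          have := D.map_algebraMap a
          rwa [MvPolynomial.algebraMap_eq] at this
        have h2 : T (MvPolynomial.C a) = Polynomial.C (algebraMap k A a) := by
          simp [hT, MvPolynomial.aeval_C, Polynomial.algebraMap_apply]
        rw [h1, map_zero, h2, Polynomial.derivative_C]
    | add p q hp hq => simp [map_add, hp, hq]
    | mul_X p i hp =>
        have hx : T (D (MvPolynomial.X i)) = Polynomial.derivative (T (MvPolynomial.X i)) := by
          rw [hD, MvPolynomial.mkDerivation_X]
          show T (MvPolynomial.X (i.1, i.2 + 1)) = _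
          simp only [hT, MvPolynomial.aeval_X]
          rw [Function.iterate_succ_apply']
        rw [Derivation.leibniz, smul_eq_mul, smul_eq_mul, map_add, map_mul, map_mul, hx, hp,
          map_mul, Polynomial.derivative_mul]
        ring
  -- iterate commutation
  have iter : ∀ (j : ℕ) (s), T ((⇑D)^[j] s) = (⇑Polynomial.derivative)^[j] (T s) := by
    intro j
    induction j with
    | zero => intro s; simp
    | succ j ih =>
        intro s
        rw [Function.iterate_succ_apply', Function.iterate_succ_apply', comm, ih]
  -- coefficients of g
  have gcoeff : ∀ (i : Fin N) (n : ℕ),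
      (g i).coeff n = if h : n < m + 1 then θ i ⟨n, h⟩ else 0 := by
    intro i n
    rw [hg]
    simp only [Polynomial.finset_sum_coeff, Polynomial.coeff_C_mul, Polynomial.coeff_X_pow]
    by_cases h : n < m + 1
    · rw [dif_pos h, Finset.sum_eq_single (⟨n, h⟩ : Fin (m + 1))]
      · simp
      · intro b _ hb
        rw [if_neg, mul_zero]
        intro he
        exact hb (by simp [Fin.ext_iff, he.symm])
      · simp
    · rw [dif_neg h]
      apply Finset.sum_eq_zero
      intro b _
      rw [if_neg, mul_zero]
      omega
  -- eval at 0 of T is aeval at the point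
  set a : Fin N × ℕ → A := fun p =>
      if h : p.2 < m + 1 then (Nat.factorial p.2) • θ p.1 ⟨p.2, h⟩ else (0 : A) with ha
  have eval0X : ∀ p : Fin N × ℕ, Polynomial.eval 0 ((⇑Polynomial.derivative)^[p.2] (g p.1)) = a p := by
    intro p
    rw [← Polynomial.coeff_zero_eq_eval_zero, Polynomial.coeff_iterate_derivative,
      zero_add, Nat.descFactorial_self, gcoeff, ha]
    by_cases h : p.2 < m + 1
    · rw [dif_pos h]; simp [dif_pos h]; intro h'; omega
    · rw [dif_neg h]; simp [dif_neg h]; intro h'; omega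
  have eval0 : ∀ s, Polynomial.eval 0 (T s) = MvPolynomial.aeval a s := by
    intro s
    have : ((Polynomial.aeval (0 : A)).restrictScalars k).comp T = MvPolynomial.aeval a := by
      apply MvPolynomial.algHom_ext
      intro p
      simp only [AlgHom.coe_comp, AlgHom.coe_restrictScalars', Function.comp_apply, hT,
        MvPolynomial.aeval_X]
      rw [Polynomial.aeval_def, ← Polynomial.eval_map, Algebra.algebraMap_self, Polynomial.map_id]
      exact eval0X p
    have := congrArg (fun φ => φ s) this
    simpa using this
  -- cancel factorials
  have cancel : ∀ (n : ℕ) (x : A), 0 < n → n • x = 0 → x = 0 := by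
    intro n x hn h
    have h2 : ((n : k)) • x = 0 := by rw [Nat.cast_smul_eq_nsmul]; exact h
    have h3 := congrArg (fun y => ((n : k)⁻¹) • y) h2
    have hnk : (n : k) ≠ 0 := Nat.cast_ne_zero.mpr hn.ne'
    simpa [smul_smul, inv_mul_cancel₀ hnk] using h3
  set ft := MvPolynomial.rename (fun i : Fin N => (i, (0 : ℕ))) f with hft
  have hTf : T ft = MvPolynomial.aeval g f := by
    rw [hft, hT, MvPolynomial.aeval_rename]
    rfl
  have key : ∀ j : ℕ, MvPolynomial.aeval a ((⇑D)^[j] ft) =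
      Nat.factorial j • (MvPolynomial.aeval g f).coeff j := by
    intro j
    rw [← eval0, iter, hTf, ← Polynomial.coeff_zero_eq_eval_zero,
      Polynomial.coeff_iterate_derivative, zero_add, Nat.descFactorial_self]
  rw [Ideal.mem_span_singleton, Polynomial.X_pow_dvd_iff]
  constructor
  · intro h j hj
    rw [key, h j (by omega), smul_zero]
  · intro h d hd
    have hh := h d (by omega)
    rw [key] at hh
    exact cancel _ _ (Nat.factorial_pos d) hh
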